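/- Let E be a row-finite directed graph, K a field, and H a hereditary subset of E^0 with hereditary saturated closure H̄. Then the two-sided ideal of the Leavitt path algebra L_K(E) generated by {v : v ∈ H} equals the two-sided ideal generated by {v : v ∈ H̄}. -/

import Mathlib

/-- Generators of a Leavitt path algebra: vertices, edges, and ghost edges. -/
inductive LPAGen (V E : Type*) : Type _
  | vertex : V → LPAGen V E
  | edge : E → LPAGen V E
  | ghost : E → LPAGen V E

variable (K : Type*) [Field K] {V E : Type*} (s r : E → V)

open FreeAlgebra in
/-- The defining relations of the Leavitt path algebra of the graph `(V, E, s, r)` over `K`: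
the vertices are mutually orthogonal idempotents, edges and ghost edges are compatible with
sources and ranges, the Cuntz–Krieger relations (CK1) and (CK2) hold, and (when the vertex
set is finite) the sum of the vertices is the identity. -/
inductive LPARel : FreeAlgebra K (LPAGen V E) → FreeAlgebra K (LPAGen V E) → Prop
  | vertex_idem (v : V) :
      LPARel (ι K (LPAGen.vertex (E := E) v) * ι K (LPAGen.vertex v)) (ι K (LPAGen.vertex v))
  | vertex_orth (v w : V) : v ≠ w →
      LPARel (ι K (LPAGen.vertex (E := E) v) * ι K (LPAGen.vertex w)) 0
  | source_edge (e : E) :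
      LPARel (ι K (LPAGen.vertex (s e)) * ι K (LPAGen.edge (V := V) e)) (ι K (LPAGen.edge e))
  | edge_range (e : E) :
      LPARel (ι K (LPAGen.edge (V := V) e) * ι K (LPAGen.vertex (r e))) (ι K (LPAGen.edge e))
  | range_ghost (e : E) :
      LPARel (ι K (LPAGen.vertex (r e)) * ι K (LPAGen.ghost (V := V) e)) (ι K (LPAGen.ghost e))
  | ghost_source (e : E) :
      LPARel (ι K (LPAGen.ghost (V := V) e) * ι K (LPAGen.vertex (s e))) (ι K (LPAGen.ghost e))
  | ck1 (e : E) :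
      LPARel (ι K (LPAGen.ghost (V := V) e) * ι K (LPAGen.edge e)) (ι K (LPAGen.vertex (r e)))
  | ck1_orth (e f : E) : e ≠ f →
      LPARel (ι K (LPAGen.ghost (V := V) e) * ι K (LPAGen.edge f)) 0
  | ck2 (v : V) (S : Finset E) : (↑S = s ⁻¹' {v}) → S.Nonempty →
      LPARel (ι K (LPAGen.vertex (E := E) v))
        (∑ e ∈ S, ι K (LPAGen.edge (V := V) e) * ι K (LPAGen.ghost e))
  | unit (S : Finset V) : (↑S = (Set.univ : Set V)) →
      LPARel 1 (∑ v ∈ S, ι K (LPAGen.vertex (E := E) v))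

/-- The Leavitt path algebra of the graph `(V, E, s, r)` over the field `K`. -/
def LeavittPathAlgebra : Type _ := RingQuot (LPARel K s r)

noncomputable instance : Ring (LeavittPathAlgebra K s r) :=
  inferInstanceAs (Ring (RingQuot (LPARel K s r)))

noncomputable instance : Algebra K (LeavittPathAlgebra K s r) :=
  inferInstanceAs (Algebra K (RingQuot (LPARel K s r)))

/-- The image in the Leavitt path algebra of a vertex `v`. -/
noncomputable def lpaVertex (v : V) : LeavittPathAlgebra K s r :=
  RingQuot.mkAlgHom K (LPARel K s r) (FreeAlgebra.ι K (LPAGen.vertex v))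

/-- The image in the Leavitt path algebra of an edge `e`. -/
noncomputable def lpaEdge (e : E) : LeavittPathAlgebra K s r :=
  RingQuot.mkAlgHom K (LPARel K s r) (FreeAlgebra.ι K (LPAGen.edge e))

/-- A subset `H` of the vertices is hereditary if every edge with source in `H` has
range in `H`. -/
def GraphHereditary (H : Set V) : Prop := ∀ e : E, s e ∈ H → r e ∈ H

/-- A subset `X` of the vertices is saturated if every vertex which is not a sink and all of
whose emitted edges have range in `X` belongs to `X`. -/
def GraphSaturated (X : Set V) : Prop :=
  ∀ v : V, (∃ e, s e = v) → (∀ e, s e = v → r e ∈ X) → v ∈ X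

/-- The hereditary saturated closure of a set of vertices: the smallest hereditary and
saturated subset containing it. -/
def HSClosure (H : Set V) : Set V :=
  ⋂₀ {X : Set V | GraphHereditary s r X ∧ GraphSaturated s r X ∧ H ⊆ X}

noncomputable def lpaGhost (e : E) : LeavittPathAlgebra K s r :=
  RingQuot.mkAlgHom K (LPARel K s r) (FreeAlgebra.ι K (LPAGen.ghost e))

lemma lpa_ghost_source (e : E) :
    lpaGhost K s r e * lpaVertex K s r (s e) = lpaGhost K s r e := by
  have := RingQuot.mkAlgHom_rel K (LPARel.ghost_source (K := K) (s := s) (r := r) e)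
  simp only [map_mul] at this; exact this

lemma lpa_ck1 (e : E) :
    lpaGhost K s r e * lpaEdge K s r e = lpaVertex K s r (r e) := by
  have := RingQuot.mkAlgHom_rel K (LPARel.ck1 (K := K) (s := s) (r := r) e)
  simp only [map_mul] at this; exact this

lemma lpa_range_ghost (e : E) :
    lpaVertex K s r (r e) * lpaGhost K s r e = lpaGhost K s r e := by
  have := RingQuot.mkAlgHom_rel K (LPARel.range_ghost (K := K) (s := s) (r := r) e)
  simp only [map_mul] at this; exact this

lemma lpa_ck2 (v : V) (S : Finset E) (hS : ↑S = s ⁻¹' {v}) (hne : S.Nonempty) :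
    lpaVertex K s r v = ∑ e ∈ S, lpaEdge K s r e * lpaGhost K s r e := by
  have := RingQuot.mkAlgHom_rel K (LPARel.ck2 (K := K) (s := s) (r := r) v S hS hne)
  simp only [map_mul, map_sum] at this; exact this

/-- Let `E` be a row-finite directed graph, `K` a field, and `H` a hereditary
subset of `E^0` with hereditary saturated closure `H̄`.  Then the two-sided ideal of the
Leavitt path algebra `L_K(E)` generated by the vertices in `H` equals the two-sided ideal
generated by the vertices in `H̄`. -/
theorem stmt11 (hrow : ∀ v : V, (s ⁻¹' {v}).Finite) (H : Set V)
    (hH : GraphHereditary s r H) :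
    TwoSidedIdeal.span ((fun v => lpaVertex K s r v) '' H) =
      TwoSidedIdeal.span ((fun v => lpaVertex K s r v) '' HSClosure s r H) := by
  set I := TwoSidedIdeal.span ((fun v => lpaVertex K s r v) '' H) with hI
  have hsubH : H ⊆ HSClosure s r H := fun v hv X hX => hX.2.2 hv
  apply le_antisymm
  · intro x hx
    exact TwoSidedIdeal.mem_span_iff.mp hx _
      (Set.Subset.trans (Set.image_mono hsubH) TwoSidedIdeal.subset_span)
  · intro x hx
    refine TwoSidedIdeal.mem_span_iff.mp hx I ?_
    rintro _ ⟨v, hv, rfl⟩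
    set X : Set V := {w : V | lpaVertex K s r w ∈ I} with hX
    have hXmem : X ∈ {Y : Set V | GraphHereditary s r Y ∧ GraphSaturated s r Y ∧ H ⊆ Y} := by
      refine ⟨?_, ?_, ?_⟩
      · intro e he
        have : lpaVertex K s r (r e)
            = lpaGhost K s r e * lpaVertex K s r (s e) * lpaEdge K s r e := by
          rw [lpa_ghost_source, lpa_ck1]
        rw [hX, Set.mem_setOf_eq, this]
        exact I.mul_mem_right _ _ (I.mul_mem_left _ _ he)
      · intro w hw hall
        have hfin := hrow w
        have hScoe : (hfin.toFinset : Set E) = s ⁻¹' {w} := hfin.coe_toFinset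
        have hne : hfin.toFinset.Nonempty := by
          obtain ⟨e, he⟩ := hw
          exact ⟨e, hfin.mem_toFinset.mpr he⟩
        rw [hX, Set.mem_setOf_eq, lpa_ck2 K s r w hfin.toFinset hScoe hne]
        refine I.finsetSum_mem _ _ fun e heS => ?_
        have hse : s e = w := hfin.mem_toFinset.mp heS
        have : lpaEdge K s r e * lpaGhost K s r e
            = lpaEdge K s r e * (lpaVertex K s r (r e) * lpaGhost K s r e) := by
          rw [lpa_range_ghost]
        rw [this]
        exact I.mul_mem_left _ _ (I.mul_mem_right _ _ (hall e hse))
      · intro w hw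
        exact TwoSidedIdeal.subset_span ⟨w, hw, rfl⟩
    exact hv X hXmem
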